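/- arXiv:2309.06083 — 5 statements merged into one kernel-verified Lean document; each statement's English description precedes it below -/
import Mathlib

section
/- Let f, g, h : D → ℝ ∪ {−∞} be functions on a Hausdorff topological space D, with f and g extended continuous and h locally upper bounded. Let A ⊆ B ⊆ D with A nonempty and compact, and suppose f(t) < g(t) for all t ∈ A. Then sup_A (f+h) < sup_B (g+h), unless h ≡ −∞ on A. -/
open Filter Topology

private lemma ereal_sub_aux {x : EReal} {ε r : ℝ} (hx : x + (ε : EReal) ≤ (r : EReal)) :
    x ≤ ((r - ε : ℝ) : EReal) := by
  induction x using EReal.rec with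
  | bot => exact bot_le
  | coe a =>
      rw [← EReal.coe_add, EReal.coe_le_coe_iff] at hx
      exact_mod_cast (by linarith : a ≤ r - ε)
  | top => simp [EReal.top_add_coe] at hx

theorem trivial_lemma_continuous {D : Type*} [TopologicalSpace D] [T2Space D]
    (f g h : D → EReal)
    (hf : Continuous f) (hg : Continuous g)
    (hfne : ∀ x, f x ≠ ⊤) (hgne : ∀ x, g x ≠ ⊤) (hhne : ∀ x, h x ≠ ⊤)
    (hloc : ∀ x : D, ∃ M : ℝ, ∀ᶠ y in 𝓝 x, h y ≤ (M : EReal))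
    (A B : Set D) (hAB : A ⊆ B) (hA : A.Nonempty) (hAc : IsCompact A)
    (hfg : ∀ t ∈ A, f t < g t)
    (hnot : ¬ ∀ t ∈ A, h t = ⊥) :
    (⨆ t ∈ A, (f t + h t)) < ⨆ t ∈ B, (g t + h t) := by
  classical
  obtain ⟨t₀, ht₀A, ht₀⟩ : ∃ t ∈ A, h t ≠ ⊥ := by
    by_contra hc
    push_neg at hc
    exact hnot hc
  have hg0 : g t₀ ≠ ⊥ := (bot_le.trans_lt (hfg t₀ ht₀A)).ne'
  have hRpos : (⊥ : EReal) < ⨆ t ∈ B, (g t + h t) := by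
    refine lt_of_lt_of_le ?_ (le_biSup (fun t => g t + h t) (hAB ht₀A))
    rw [bot_lt_iff_ne_bot]
    simp [EReal.add_eq_bot_iff, hg0, ht₀]
  -- per-point data
  have key : ∀ t ∈ A, ∃ (c d M : ℝ) (U : Set D), U ∈ 𝓝 t ∧ c < d ∧
      ∀ y ∈ U, f y < (c : EReal) ∧ (d : EReal) < g y ∧ h y ≤ (M : EReal) := by
    intro t ht
    obtain ⟨c, hc1, hc2⟩ := EReal.exists_between_coe_real (hfg t ht)
    obtain ⟨d, hd1, hd2⟩ := EReal.exists_between_coe_real hc2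
    obtain ⟨M, hM⟩ := hloc t
    refine ⟨c, d, M,
      ({y | f y < (c : EReal)} ∩ {y | (d : EReal) < g y}) ∩ {y | h y ≤ (M : EReal)},
      ?_, by exact_mod_cast hd1, ?_⟩
    · refine Filter.inter_mem (Filter.inter_mem ?_ ?_) hM
      · exact (isOpen_Iio.preimage hf).mem_nhds hc1
      · exact (isOpen_Ioi.preimage hg).mem_nhds hd2
    · rintro y ⟨⟨h1, h2⟩, h3⟩
      exact ⟨h1, h2, h3⟩
  choose c d M U hU hcd hprop using key
  obtain ⟨s, hs⟩ := hAc.elim_nhds_subcover' U hU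
  have hmem : ∀ y ∈ A, ∃ x ∈ s, y ∈ U x.1 x.2 := by
    intro y hy
    have := hs hy
    simp only [Set.mem_iUnion] at this
    obtain ⟨x, hx, hyx⟩ := this
    exact ⟨x, hx, hyx⟩
  obtain ⟨x₀, hx₀s, _⟩ := hmem t₀ ht₀A
  have hsne : s.Nonempty := ⟨x₀, hx₀s⟩
  set ε : ℝ := s.inf' hsne (fun x => d x.1 x.2 - c x.1 x.2) with hε
  set C : ℝ := s.sup' hsne (fun x => c x.1 x.2) with hC
  set Mx : ℝ := s.sup' hsne (fun x => M x.1 x.2) with hMx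
  have hεpos : 0 < ε := by
    rw [hε, Finset.lt_inf'_iff]
    intro x hx
    have := hcd x.1 x.2
    linarith
  have hbounds : ∀ y ∈ A, f y + (ε : EReal) ≤ g y ∧ f y ≤ (C : EReal) ∧ h y ≤ (Mx : EReal) := by
    intro y hy
    obtain ⟨x, hxs, hyU⟩ := hmem y hy
    obtain ⟨h1, h2, h3⟩ := hprop x.1 x.2 y hyU
    have hcC : (c x.1 x.2 : EReal) ≤ (C : EReal) := by
      exact_mod_cast Finset.le_sup' (f := fun x => c x.1 x.2) hxs
    have hMM : (M x.1 x.2 : EReal) ≤ (Mx : EReal) := by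
      exact_mod_cast Finset.le_sup' (f := fun x => M x.1 x.2) hxs
    refine ⟨?_, h1.le.trans hcC, h3.trans hMM⟩
    have hεd : (ε : EReal) ≤ ((d x.1 x.2 - c x.1 x.2 : ℝ) : EReal) := by
      exact_mod_cast Finset.inf'_le (fun x : ↥A => d x.1 x.2 - c x.1 x.2) hxs
    calc f y + (ε : EReal) ≤ (c x.1 x.2 : EReal) + ((d x.1 x.2 - c x.1 x.2 : ℝ) : EReal) :=
          add_le_add h1.le hεd
      _ = (d x.1 x.2 : EReal) := by rw [← EReal.coe_add]; norm_num
      _ ≤ g y := h2.le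
  have hStop : (⨆ t ∈ A, (f t + h t)) ≤ ((C + Mx : ℝ) : EReal) := by
    refine iSup₂_le fun t ht => ?_
    obtain ⟨_, h2, h3⟩ := hbounds t ht
    rw [EReal.coe_add]
    exact add_le_add h2 h3
  have hSne : (⨆ t ∈ A, (f t + h t)) ≠ ⊤ := fun hS =>
    EReal.coe_ne_top _ (top_le_iff.1 (hS ▸ hStop))
  rcases eq_or_ne (⨆ t ∈ B, (g t + h t)) ⊤ with hR | hR
  · rw [hR]; exact lt_top_iff_ne_top.2 hSne
  · obtain ⟨r, hr⟩ : ∃ r : ℝ, (⨆ t ∈ B, (g t + h t)) = (r : EReal) := by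
      lift (⨆ t ∈ B, (g t + h t)) to ℝ using ⟨hR, hRpos.ne'⟩ with r hr
      exact ⟨r, rfl⟩
    have hSle : (⨆ t ∈ A, (f t + h t)) ≤ ((r - ε : ℝ) : EReal) := by
      refine iSup₂_le fun t ht => ?_
      have h1 : f t + (ε : EReal) ≤ g t := (hbounds t ht).1
      have h2 : f t + h t + (ε : EReal) ≤ (r : EReal) := by
        calc f t + h t + (ε : EReal) = (f t + (ε : EReal)) + h t := by
              rw [add_assoc, add_comm (h t), ← add_assoc]
          _ ≤ g t + h t := add_le_add_left h1 _
          _ ≤ (r : EReal) := hr ▸ le_biSup (fun t => g t + h t) (hAB ht)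
      exact ereal_sub_aux h2
    rw [hr]
    refine hSle.trans_lt ?_
    exact_mod_cast (by linarith : r - ε < r)
end

section
/- Let K : ℝ → ℝ ∪ {−∞} be 1-periodic, finite and concave on (0,1) (extended continuously to endpoints with possibly K(0) = −∞). Let 0 ≤ α < a < b < β ≤ 1 and p, q > 0 with p(a−α) = q(β−b). Then for every t ∈ [0,α] ∪ [β,1], p·K(t−α) + q·K(t−β) ≤ p·K(t−a) + q·K(t−b). -/
open Filter Topology Set

/-- Core inequality: for `0 ≤ x1 < x2 < x3 < x4 ≤ 1` with `p (x4 - x3) = q (x2 - x1)`,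
concavity gives `p K x4 + q K x1 ≤ p K x3 + q K x2`. -/
lemma perturbation_core
    (K : ℝ → EReal) (g : ℝ → ℝ)
    (hg : ConcaveOn ℝ (Set.Ioo (0 : ℝ) 1) g)
    (heq : ∀ t ∈ Set.Ioo (0 : ℝ) 1, K t = (g t : EReal))
    (h0 : Tendsto K (𝓝[>] (0 : ℝ)) (𝓝 (K 0)))
    (h1 : Tendsto K (𝓝[<] (1 : ℝ)) (𝓝 (K 1)))
    (p q x1 x2 x3 x4 : ℝ) (hp : 0 < p) (hq : 0 < q)
    (h0x : 0 ≤ x1) (h12 : x1 < x2) (h23 : x2 < x3) (h34 : x3 < x4) (hx4 : x4 ≤ 1)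
    (hμ : p * (x4 - x3) = q * (x2 - x1)) :
    (p : EReal) * K x4 + (q : EReal) * K x1 ≤ (p : EReal) * K x3 + (q : EReal) * K x2 := by
  have hx2m : x2 ∈ Set.Ioo (0 : ℝ) 1 := ⟨lt_of_le_of_lt h0x h12, lt_of_lt_of_le (h23.trans h34) hx4⟩
  have hx3m : x3 ∈ Set.Ioo (0 : ℝ) 1 := ⟨hx2m.1.trans h23, lt_of_lt_of_le h34 hx4⟩
  set m : ℝ := (g x3 - g x2) / (x3 - x2) with hm_def
  set L : ℝ → ℝ := fun x => g x2 + m * (x - x2) with hL_def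
  have h32 : (0:ℝ) < x3 - x2 := by linarith
  have hm : m * (x3 - x2) = g x3 - g x2 := div_mul_cancel₀ _ h32.ne'
  -- below the secant line on the left
  have hA : ∀ u ∈ Set.Ioo (0 : ℝ) x2, g u ≤ L u := by
    intro u hu
    have hum : u ∈ Set.Ioo (0 : ℝ) 1 := ⟨hu.1, hu.2.trans hx2m.2⟩
    obtain ⟨hu1, hu2⟩ := hu
    have hs := hg.slope_anti_adjacent hum hx3m hu2 h23
    rw [← hm_def] at hs
    have := (le_div_iff₀ (by linarith : (0:ℝ) < x2 - u)).1 hs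
    simp only [hL_def]
    nlinarith
  -- below the secant line on the right
  have hB : ∀ w ∈ Set.Ioo x3 (1 : ℝ), g w ≤ L w := by
    intro w hw
    have hwm : w ∈ Set.Ioo (0 : ℝ) 1 := ⟨hx3m.1.trans hw.1, hw.2⟩
    obtain ⟨hw1, hw2⟩ := hw
    have hs := hg.slope_anti_adjacent hx2m hwm h23 hw1
    rw [← hm_def] at hs
    have := (div_le_iff₀ (by linarith : (0:ℝ) < w - x3)).1 hs
    simp only [hL_def]
    nlinarith
  -- K x1 ≤ L x1
  have hK1 : K x1 ≤ ((L x1 : ℝ) : EReal) := by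
    rcases eq_or_lt_of_le h0x with h | h
    · rw [← h]
      have hLt : Tendsto (fun u : ℝ => ((L u : ℝ) : EReal)) (𝓝[>] (0:ℝ)) (𝓝 ((L 0 : ℝ) : EReal)) := by
        apply EReal.tendsto_coe.2
        exact ((continuous_const.add (continuous_const.mul
          (continuous_id.sub continuous_const))).tendsto 0).mono_left nhdsWithin_le_nhds
      have hev : ∀ᶠ u in 𝓝[>] (0:ℝ), K u ≤ ((L u : ℝ) : EReal) := by
        filter_upwards [Ioo_mem_nhdsGT_of_mem
          (⟨le_refl (0:ℝ), lt_of_le_of_lt h0x h12⟩ : (0:ℝ) ∈ Set.Ico 0 x2)] with u hu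
        rw [heq u ⟨hu.1, hu.2.trans hx2m.2⟩]
        exact EReal.coe_le_coe_iff.2 (hA u hu)
      exact le_of_tendsto_of_tendsto h0 hLt hev
    · rw [heq x1 ⟨h, h12.trans hx2m.2⟩]
      exact EReal.coe_le_coe_iff.2 (hA x1 ⟨h, h12⟩)
  -- K x4 ≤ L x4
  have hK4 : K x4 ≤ ((L x4 : ℝ) : EReal) := by
    rcases eq_or_lt_of_le hx4 with h | h
    · rw [h]
      have hLt : Tendsto (fun w : ℝ => ((L w : ℝ) : EReal)) (𝓝[<] (1:ℝ)) (𝓝 ((L 1 : ℝ) : EReal)) := by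
        apply EReal.tendsto_coe.2
        exact ((continuous_const.add (continuous_const.mul
          (continuous_id.sub continuous_const))).tendsto 1).mono_left nhdsWithin_le_nhds
      have hev : ∀ᶠ w in 𝓝[<] (1:ℝ), K w ≤ ((L w : ℝ) : EReal) := by
        filter_upwards [Ioo_mem_nhdsLT_of_mem
          (⟨lt_of_lt_of_le h34 hx4, le_refl (1:ℝ)⟩ : (1:ℝ) ∈ Set.Ioc x3 1)] with w hw
        rw [heq w ⟨hx3m.1.trans hw.1, hw.2⟩]
        exact EReal.coe_le_coe_iff.2 (hB w hw)
      exact le_of_tendsto_of_tendsto h1 hLt hev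
    · rw [heq x4 ⟨hx3m.1.trans h34, h⟩]
      exact EReal.coe_le_coe_iff.2 (hB x4 ⟨h34, h⟩)
  -- the linear function balances
  have hbal : p * L x4 + q * L x1 = p * g x3 + q * g x2 := by
    simp only [hL_def]
    linear_combination p * hm + m * hμ
  calc (p : EReal) * K x4 + (q : EReal) * K x1
      ≤ (p : EReal) * ((L x4 : ℝ) : EReal) + (q : EReal) * ((L x1 : ℝ) : EReal) := by
        exact add_le_add (mul_le_mul_of_nonneg_left hK4 (EReal.coe_nonneg.2 hp.le))
          (mul_le_mul_of_nonneg_left hK1 (EReal.coe_nonneg.2 hq.le))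
    _ = ((p * L x4 + q * L x1 : ℝ) : EReal) := by
        rw [← EReal.coe_mul, ← EReal.coe_mul, ← EReal.coe_add]
    _ = ((p * g x3 + q * g x2 : ℝ) : EReal) := by rw [hbal]
    _ = (p : EReal) * K x3 + (q : EReal) * K x2 := by
        rw [heq x3 hx3m, heq x2 hx2m, ← EReal.coe_mul, ← EReal.coe_mul, ← EReal.coe_add]

theorem perturbation_lemma_outside
    (K : ℝ → EReal)
    (hper : ∀ t : ℝ, K (t - 1) = K t)
    (hconc : ∃ g : ℝ → ℝ, ConcaveOn ℝ (Set.Ioo (0 : ℝ) 1) g ∧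
      ∀ t ∈ Set.Ioo (0 : ℝ) 1, K t = (g t : EReal))
    (h0 : Tendsto K (𝓝[>] (0 : ℝ)) (𝓝 (K 0)))
    (h1 : Tendsto K (𝓝[<] (1 : ℝ)) (𝓝 (K 1)))
    (α a b β p q : ℝ)
    (hα : 0 ≤ α) (hαa : α < a) (hab : a < b) (hbβ : b < β) (hβ : β ≤ 1)
    (hp : 0 < p) (hq : 0 < q)
    (hμ : p * (a - α) = q * (β - b)) :
    ∀ t ∈ Set.Icc (0 : ℝ) α ∪ Set.Icc β 1,
      (p : EReal) * K (t - α) + (q : EReal) * K (t - β) ≤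
        (p : EReal) * K (t - a) + (q : EReal) * K (t - b) := by
  obtain ⟨g, hg, heq⟩ := hconc
  intro t ht
  rcases ht with ht | ht
  · -- t ∈ [0, α]: shift by +1
    have e1 : K (t - α) = K (t + 1 - α) := by
      have := hper (t + 1 - α); rw [← this]; ring_nf
    have e2 : K (t - β) = K (t + 1 - β) := by
      have := hper (t + 1 - β); rw [← this]; ring_nf
    have e3 : K (t - a) = K (t + 1 - a) := by
      have := hper (t + 1 - a); rw [← this]; ring_nf
    have e4 : K (t - b) = K (t + 1 - b) := by
      have := hper (t + 1 - b); rw [← this]; ring_nf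
    rw [e1, e2, e3, e4]
    exact perturbation_core K g hg heq h0 h1 p q (t + 1 - β) (t + 1 - b) (t + 1 - a)
      (t + 1 - α) hp hq (by linarith [ht.1]) (by linarith) (by linarith) (by linarith)
      (by linarith [ht.2]) (by linarith)
  · exact perturbation_core K g hg heq h0 h1 p q (t - β) (t - b) (t - a) (t - α)
      hp hq (by linarith [ht.1]) (by linarith) (by linarith) (by linarith)
      (by linarith [ht.2]) (by linarith)
end

section
/- Let K(t) = log|sin(πt)| and nodes y₁ = 7/12, y₂ = 11/12. Then f(y,t) = K(t−7/12) + K(t−11/12) satisfies f(y,0) = f(y,1/2) = f(y,3/4) = −2 log 2. -/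
open Real

lemma sin_mul_sin' (a b : ℝ) :
    Real.sin a * Real.sin b = (Real.cos (a - b) - Real.cos (a + b)) / 2 := by
  rw [Real.cos_sub_cos]
  have h1 : (a - b + (a + b)) / 2 = a := by ring
  have h2 : (a - b - (a + b)) / 2 = -b := by ring
  rw [h1, h2, Real.sin_neg]
  ring

lemma logsum (a b : ℝ) (h : |Real.sin a * Real.sin b| = 1 / 4) :
    Real.log |Real.sin a| + Real.log |Real.sin b| = -2 * Real.log 2 := by
  have hne : Real.sin a * Real.sin b ≠ 0 := by
    intro h0; rw [h0, abs_zero] at h; norm_num at h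
  have ha : |Real.sin a| ≠ 0 := by
    simpa using fun h0 => hne (by simp [h0, (mul_ne_zero_iff.mp hne).1])
  have ha : Real.sin a ≠ 0 := (mul_ne_zero_iff.mp hne).1
  have hb : Real.sin b ≠ 0 := (mul_ne_zero_iff.mp hne).2
  rw [← Real.log_mul (abs_ne_zero.mpr ha) (abs_ne_zero.mpr hb), ← abs_mul, h]
  rw [one_div, Real.log_inv, show (4:ℝ) = 2 ^ 2 by norm_num, Real.log_pow]
  push_cast; ring

theorem minimax_configuration_values :
    Real.log |Real.sin (π * ((0 : ℝ) - 7 / 12))| +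
        Real.log |Real.sin (π * ((0 : ℝ) - 11 / 12))| = -2 * Real.log 2 ∧
    Real.log |Real.sin (π * ((1 : ℝ) / 2 - 7 / 12))| +
        Real.log |Real.sin (π * ((1 : ℝ) / 2 - 11 / 12))| = -2 * Real.log 2 ∧
    Real.log |Real.sin (π * ((3 : ℝ) / 4 - 7 / 12))| +
        Real.log |Real.sin (π * ((3 : ℝ) / 4 - 11 / 12))| = -2 * Real.log 2 := by
  refine ⟨logsum _ _ ?_, logsum _ _ ?_, logsum _ _ ?_⟩
  · rw [sin_mul_sin']
    have h1 : π * ((0:ℝ) - 7 / 12) - π * ((0:ℝ) - 11 / 12) = π / 3 := by ring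
    have h2 : π * ((0:ℝ) - 7 / 12) + π * ((0:ℝ) - 11 / 12) = -(π + π / 2) := by ring
    rw [h1, h2, Real.cos_neg, Real.cos_add, Real.cos_pi, Real.sin_pi, Real.cos_pi_div_two, Real.sin_pi_div_two, Real.cos_pi_div_three]
    norm_num
  · rw [sin_mul_sin']
    have h1 : π * ((1:ℝ) / 2 - 7 / 12) - π * ((1:ℝ) / 2 - 11 / 12) = π / 3 := by ring
    have h2 : π * ((1:ℝ) / 2 - 7 / 12) + π * ((1:ℝ) / 2 - 11 / 12) = -(π / 2) := by ring
    rw [h1, h2, Real.cos_neg, Real.cos_pi_div_two, Real.cos_pi_div_three]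
    norm_num
  · have h1 : π * ((3:ℝ) / 4 - 7 / 12) = π / 6 := by ring
    have h2 : π * ((3:ℝ) / 4 - 11 / 12) = -(π / 6) := by ring
    rw [h1, h2, Real.sin_neg, Real.sin_pi_div_six]
    norm_num
end

section
/- Let K(t) = log|sin(πt)| and let the nodes be y₁ = (x−z)/2, y₂ = (x+z)/2 with 1 ≤ x < 3/2 and cos(πz) = (1 + cos(πx))/2, 0 ≤ z ≤ 2−x. Then f(y, x/2) = f(y, 1) = −2 log 2 + log(1 − cos(πx)). -/
open Real

theorem equioscillation_family_values (x z : ℝ)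
    (hx1 : 1 ≤ x) (hx2 : x < 3 / 2)
    (hz0 : 0 ≤ z) (hz1 : z ≤ 2 - x)
    (hz : Real.cos (π * z) = (1 + Real.cos (π * x)) / 2) :
    Real.log |Real.sin (π * (x / 2 - (x - z) / 2))| +
        Real.log |Real.sin (π * (x / 2 - (x + z) / 2))| =
      -2 * Real.log 2 + Real.log (1 - Real.cos (π * x)) ∧
    Real.log |Real.sin (π * ((1 : ℝ) - (x - z) / 2))| +
        Real.log |Real.sin (π * ((1 : ℝ) - (x + z) / 2))| =
      -2 * Real.log 2 + Real.log (1 - Real.cos (π * x)) := by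
  have hpi := Real.pi_pos
  have hc : Real.cos (π * x) ≤ 0 := by
    apply Real.cos_nonpos_of_pi_div_two_le_of_le
    · nlinarith
    · nlinarith
  set c := Real.cos (π * x) with hcdef
  have hpos : (0:ℝ) < 1 - c := by linarith
  have key : Real.log ((1 - c) / 4) = -2 * Real.log 2 + Real.log (1 - c) := by
    rw [Real.log_div (by linarith) (by norm_num)]
    have h4 : Real.log 4 = 2 * Real.log 2 := by
      rw [show (4:ℝ) = 2 ^ 2 by norm_num, Real.log_pow]; push_cast; ring
    rw [h4]; ring
  constructor
  · have h1 : π * (x / 2 - (x - z) / 2) = π * z / 2 := by ring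
    have h2 : π * (x / 2 - (x + z) / 2) = -(π * z / 2) := by ring
    rw [h1, h2, Real.sin_neg, abs_neg]
    have hsq : Real.sin (π * z / 2) ^ 2 = (1 - c) / 4 := by
      have hs := Real.sin_sq_eq_half_sub (π * z / 2)
      rw [show 2 * (π * z / 2) = π * z by ring, hz] at hs
      rw [hs]; ring
    have hne : Real.sin (π * z / 2) ≠ 0 := by
      intro h
      rw [h] at hsq
      simp at hsq
      nlinarith
    rw [← Real.log_mul (abs_ne_zero.2 hne) (abs_ne_zero.2 hne), ← abs_mul, ← sq,
      abs_of_pos (by positivity : (0:ℝ) < Real.sin (π * z / 2) ^ 2), hsq, key]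
  · have h1 : π * ((1:ℝ) - (x - z) / 2) = π - π * (x - z) / 2 := by ring
    have h2 : π * ((1:ℝ) - (x + z) / 2) = π - π * (x + z) / 2 := by ring
    rw [h1, h2, Real.sin_pi_sub, Real.sin_pi_sub]
    have hprod : Real.sin (π * (x - z) / 2) * Real.sin (π * (x + z) / 2) = (1 - c) / 4 := by
      have hcs := Real.cos_sub_cos (π * z) (π * x)
      rw [hz] at hcs
      have e1 : (π * z + π * x) / 2 = π * (x + z) / 2 := by ring
      have e2 : (π * z - π * x) / 2 = -(π * (x - z) / 2) := by ring
      rw [e1, e2, Real.sin_neg] at hcs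
      nlinarith [hcs]
    have hne1 : Real.sin (π * (x - z) / 2) ≠ 0 := by
      intro h; rw [h] at hprod; simp at hprod; nlinarith
    have hne2 : Real.sin (π * (x + z) / 2) ≠ 0 := by
      intro h; rw [h] at hprod; simp at hprod; nlinarith
    rw [← Real.log_mul (abs_ne_zero.2 hne1) (abs_ne_zero.2 hne2), ← abs_mul, hprod,
      abs_of_pos (by positivity : (0:ℝ) < (1 - c) / 4), key]
end

section
/- For x ∈ [1, 3/2], the equation cos(πz) = (1 + cos(πx))/2 has a unique solution z ∈ [0, 2−x], and the resulting equioscillation value −2 log 2 + log(1 − cos(πx)) is strictly decreasing in x on [1, 3/2], with maximum value −log 2 at x = 1 and minimum value −2 log 2 at x = 3/2. -/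
open Real Set

theorem equioscillation_values_monotone :
    (∀ x ∈ Set.Icc (1 : ℝ) (3 / 2),
      ∃! z : ℝ, z ∈ Set.Icc (0 : ℝ) (2 - x) ∧
        Real.cos (π * z) = (1 + Real.cos (π * x)) / 2) ∧
    StrictAntiOn (fun x : ℝ => -2 * Real.log 2 + Real.log (1 - Real.cos (π * x)))
      (Set.Icc (1 : ℝ) (3 / 2)) ∧
    (-2 * Real.log 2 + Real.log (1 - Real.cos (π * 1)) = -Real.log 2) ∧
    (-2 * Real.log 2 + Real.log (1 - Real.cos (π * (3 / 2))) = -2 * Real.log 2) := by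
  refine ⟨?_, ?_, ?_, ?_⟩
  · rintro x ⟨hx1, hx2⟩
    have hx2' : 2 - x ≤ 1 := by linarith
    have h0 : (0:ℝ) ≤ 2 - x := by linarith
    have hcont : ContinuousOn (fun z : ℝ => Real.cos (π * z)) (Icc 0 (2 - x)) :=
      (Real.continuous_cos.comp (continuous_const.mul continuous_id)).continuousOn
    have hend : Real.cos (π * (2 - x)) = Real.cos (π * x) := by
      rw [show π * (2 - x) = 2 * π - π * x by ring, Real.cos_two_pi_sub]
    have key : (1 + Real.cos (π * x)) / 2 ∈
        Icc ((fun z : ℝ => Real.cos (π * z)) (2 - x)) ((fun z : ℝ => Real.cos (π * z)) 0) := by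
      constructor
      · simp only [hend]
        have := Real.cos_le_one (π * x); linarith
      · simp only [mul_zero, Real.cos_zero]
        have h1 := Real.neg_one_le_cos (π * x)
        have h2 := Real.cos_le_one (π * x); linarith
    obtain ⟨z, hz, hfz⟩ := intermediate_value_Icc' h0 hcont key
    refine ⟨z, ⟨hz, hfz⟩, ?_⟩
    rintro y ⟨hy, hfy⟩
    have hmem : ∀ w ∈ Icc (0:ℝ) (2 - x), π * w ∈ Icc 0 π := by
      rintro w ⟨hw1, hw2⟩
      exact ⟨mul_nonneg Real.pi_pos.le hw1,
        by calc π * w ≤ π * 1 := mul_le_mul_of_nonneg_left (le_trans hw2 hx2') Real.pi_pos.le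
                _ = π := mul_one π⟩
    have := Real.strictAntiOn_cos.injOn (hmem y hy) (hmem z hz) (by rw [hfy]; exact hfz.symm)
    exact mul_left_cancel₀ Real.pi_ne_zero this
  · rintro a ⟨ha1, ha2⟩ b ⟨hb1, hb2⟩ hab
    simp only
    have hpi := Real.pi_pos
    have hmem : ∀ w : ℝ, 1 ≤ w → w ≤ 3/2 → 2 * π - π * w ∈ Icc 0 π := by
      intro w h1 h2
      constructor <;> nlinarith
    have hca : Real.cos (π * a) < Real.cos (π * b) := by
      have := Real.strictAntiOn_cos (hmem b hb1 hb2) (hmem a ha1 ha2) (by nlinarith)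
      rwa [show 2 * π - π * a = 2 * π - π * a by ring,
        Real.cos_two_pi_sub, Real.cos_two_pi_sub] at this
    have hbpos : 0 < 1 - Real.cos (π * b) := by
      have hnp : Real.cos (π * b) ≤ 0 := by
        rw [← Real.cos_two_pi_sub]
        apply Real.cos_nonpos_of_pi_div_two_le_of_le <;> nlinarith
      linarith
    have := Real.log_lt_log hbpos (by linarith : 1 - Real.cos (π * b) < 1 - Real.cos (π * a))
    linarith
  · rw [mul_one, Real.cos_pi]
    norm_num
    rw [show (2:ℝ) = 1 + 1 by norm_num]
    ring
  · rw [show π * (3/2) = π + π/2 by ring, Real.cos_add, Real.cos_pi, Real.sin_pi,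
      Real.cos_pi_div_two]
    norm_num
end
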